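/- Let M be a real symmetric positive semidefinite matrix written in block form as M = [[A, A C^T],[C A, C A C^T]] where A is a full-rank principal submatrix. Then every nonzero eigenvalue of M is at least the least nonzero eigenvalue of A. -/

import Mathlib

open Matrix in
lemma quad_lower_aux {m : ℕ} (A : Matrix (Fin m) (Fin m) ℝ) (hA : A.IsHermitian) (ρ : ℝ)
    (h : ∀ j, ρ ≤ hA.eigenvalues j) (u : Fin m → ℝ) :
    ρ * (u ⬝ᵥ u) ≤ u ⬝ᵥ (A *ᵥ u) := by
  set U : Matrix (Fin m) (Fin m) ℝ := (hA.eigenvectorUnitary : Matrix (Fin m) (Fin m) ℝ)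
  have hU : U * star U = 1 := (Matrix.mem_unitaryGroup_iff).mp hA.eigenvectorUnitary.2
  have hdiag : A - ρ • (1 : Matrix (Fin m) (Fin m) ℝ) =
      U * diagonal (fun j => hA.eigenvalues j - ρ) * star U := by
    have h1 : (diagonal (fun j => hA.eigenvalues j - ρ) : Matrix (Fin m) (Fin m) ℝ)
        = diagonal (RCLike.ofReal ∘ hA.eigenvalues) - ρ • 1 := by
      ext i j
      by_cases hij : i = j <;>
        simp [Matrix.diagonal_apply, Matrix.one_apply, hij, Function.comp]
    rw [h1, Matrix.mul_sub, Matrix.sub_mul, Matrix.mul_smul, Matrix.smul_mul, Matrix.mul_one, hU]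
    conv_lhs => rw [hA.spectral_theorem, Unitary.conjStarAlgAut_apply]
  have hpsd : (A - ρ • (1 : Matrix (Fin m) (Fin m) ℝ)).PosSemidef := by
    rw [hdiag]
    exact (Matrix.posSemidef_diagonal_iff.mpr (fun j => sub_nonneg.mpr (h j)))
      |>.mul_mul_conjTranspose_same U
  have := hpsd.dotProduct_mulVec_nonneg u
  simp only [RCLike.re_to_real, star_trivial] at this
  have hexp : u ⬝ᵥ ((A - ρ • (1 : Matrix (Fin m) (Fin m) ℝ)) *ᵥ u)
      = u ⬝ᵥ (A *ᵥ u) - ρ * (u ⬝ᵥ u) := by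
    rw [Matrix.sub_mulVec, dotProduct_sub, Matrix.smul_mulVec, Matrix.one_mulVec,
      dotProduct_smul, smul_eq_mul]
  rw [hexp] at this
  linarith

open Matrix in
/-- If M = [[A, AC.transpose],[CA, CAC.transpose]] is symmetric PSD with A a full-rank symmetric
principal block, then every nonzero eigenvalue of M is at least the least
(nonzero) eigenvalue of A. -/
theorem stmt_1 (m k : ℕ) (A : Matrix (Fin m) (Fin m) ℝ) (C : Matrix (Fin k) (Fin m) ℝ)
    (hA : A.IsHermitian) (hAfr : A.det ≠ 0)
    (hMpsd : (Matrix.fromBlocks A (A * C.transpose) (C * A) (C * A * C.transpose)).PosSemidef)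
    (hM : (Matrix.fromBlocks A (A * C.transpose) (C * A) (C * A * C.transpose)).IsHermitian) :
    ∀ ρ : ℝ, (∀ j, hA.eigenvalues j ≠ 0 → ρ ≤ hA.eigenvalues j) →
      ∀ i, hM.eigenvalues i ≠ 0 → ρ ≤ hM.eigenvalues i := by
  intro ρ hρ i hi
  -- all eigenvalues of A are nonzero
  have hAeig : ∀ j, ρ ≤ hA.eigenvalues j := by
    intro j
    refine hρ j (fun h0 => hAfr ?_)
    have := hA.det_eq_prod_eigenvalues
    rw [this]
    exact Finset.prod_eq_zero (Finset.mem_univ j) (by simp [h0])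
  set lam := hM.eigenvalues i with hlam
  have hlam_nonneg : 0 ≤ lam := hMpsd.eigenvalues_nonneg i
  have hlam_pos : 0 < lam := lt_of_le_of_ne hlam_nonneg (Ne.symm hi)
  rcases le_or_gt ρ 0 with hρ0 | hρ0
  · linarith
  -- eigenvector
  set v := hM.eigenvectorBasis i with hv
  have hv0 : v ≠ 0 := hM.eigenvectorBasis.orthonormal.ne_zero i
  have heig := hM.mulVec_eigenvectorBasis i
  set x : Fin m → ℝ := fun j => v (Sum.inl j) with hx
  set y : Fin k → ℝ := fun j => v (Sum.inr j) with hy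
  have hvelim : ⇑v = Sum.elim x y := by
    funext j; cases j <;> rfl
  rw [hvelim, Matrix.fromBlocks_mulVec] at heig
  have h1 : A *ᵥ x + (A * Cᵀ) *ᵥ y = lam • x := by
    funext j; exact congrFun heig (Sum.inl j)
  have h2 : (C * A) *ᵥ x + (C * A * Cᵀ) *ᵥ y = lam • y := by
    funext j; exact congrFun heig (Sum.inr j)
  have hyx : y = C *ᵥ x := by
    have h2' : (C * A) *ᵥ x + (C * A * Cᵀ) *ᵥ y = lam • (C *ᵥ x) := by
      rw [← Matrix.mulVec_smul, ← h1, Matrix.mulVec_add, Matrix.mulVec_mulVec,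
        Matrix.mulVec_mulVec, Matrix.mul_assoc]
    exact smul_right_injective (Fin k → ℝ) hi (h2.symm.trans h2')
  have hx0 : x ≠ 0 := by
    intro h0
    apply hv0
    have hy0 : y = 0 := by rw [hyx, h0, Matrix.mulVec_zero]
    ext j
    have := congrFun hvelim j
    cases j with
    | inl a => simpa [h0] using congrFun hvelim (Sum.inl a)
    | inr a => simpa [hy0] using congrFun hvelim (Sum.inr a)
  set w : Fin m → ℝ := x + Cᵀ *ᵥ (C *ᵥ x) with hw
  have hAw : A *ᵥ w = lam • x := by
    rw [← h1, hw, Matrix.mulVec_add, hyx, Matrix.mulVec_mulVec]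
  set s : ℝ := x ⬝ᵥ w with hsdef
  have hs : s = x ⬝ᵥ x + (C *ᵥ x) ⬝ᵥ (C *ᵥ x) := by
    rw [hsdef, hw, dotProduct_add, dotProduct_mulVec, Matrix.vecMul_transpose]
  have dself : ∀ {p : ℕ} (u : Fin p → ℝ), 0 ≤ u ⬝ᵥ u := fun u =>
    Finset.sum_nonneg fun j _ => mul_self_nonneg _
  have hxx_pos : 0 < x ⬝ᵥ x := by
    rcases (dself x).lt_or_eq with h | h
    · exact h
    · exact absurd (dotProduct_self_eq_zero.mp h.symm) hx0
  have hCx_nonneg : 0 ≤ (C *ᵥ x) ⬝ᵥ (C *ᵥ x) := dself _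
  have hs_ge : x ⬝ᵥ x ≤ s := by rw [hs]; linarith
  have hs_pos : 0 < s := lt_of_lt_of_le hxx_pos hs_ge
  have hq : w ⬝ᵥ (A *ᵥ w) = lam * s := by
    rw [hAw, dotProduct_smul, smul_eq_mul, hsdef, dotProduct_comm]
  -- Cauchy-Schwarz : s^2 ≤ (x⬝x)(w⬝w)
  have hcs : s ^ 2 ≤ (x ⬝ᵥ x) * (w ⬝ᵥ w) := by
    have := Finset.sum_mul_sq_le_sq_mul_sq Finset.univ x w
    simpa [hsdef, dotProduct, pow_two] using this
  have hww : s ≤ w ⬝ᵥ w := by nlinarith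
  have hquad := quad_lower_aux A hA ρ hAeig w
  rw [hq] at hquad
  nlinarith
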